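/- Let F be a finite field whose characteristic does not divide n, where n ≥ 3. Then there exist n×n matrices A and B over F with trace A = trace B = 0 such that every g ∈ GL_n(F) commuting with both A and B is a scalar matrix. (That is, the conjugation action of PGL_n(F) on the space of trace-zero matrices admits a base of size 2.) -/

import Mathlib

/-- If `F` is a finite field whose characteristic does not divide `n ≥ 3`, then there are
trace-zero `n×n` matrices `A` and `B` over `F` such that any `g ∈ GL_n(F)` commuting with
both `A` and `B` is scalar; i.e. the conjugation action of `PGL_n(F)` on trace-zero matrices
admits a base of size 2. -/
theorem stmt9 {F : Type*} [Field F] [Fintype F] (n : ℕ) (hn : 3 ≤ n)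
    (hchar : ¬ (ringChar F ∣ n)) :
    ∃ A B : Matrix (Fin n) (Fin n) F, A.trace = 0 ∧ B.trace = 0 ∧
      ∀ g : Matrix.GeneralLinearGroup (Fin n) F,
        (g : Matrix (Fin n) (Fin n) F) * A = A * (g : Matrix (Fin n) (Fin n) F) →
        (g : Matrix (Fin n) (Fin n) F) * B = B * (g : Matrix (Fin n) (Fin n) F) →
        ∃ c : F, (g : Matrix (Fin n) (Fin n) F) = c • (1 : Matrix (Fin n) (Fin n) F) := by
  haveI : NeZero n := ⟨by omega⟩
  have hn0 : (n : F) ≠ 0 := by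
    intro h
    exact hchar ((CharP.cast_eq_zero_iff F (ringChar F) n).mp h)
  set A : Matrix (Fin n) (Fin n) F :=
    Matrix.of (fun i j => if (j : ℕ) = (i : ℕ) + 1 then 1 else 0) with hA
  set E : Matrix (Fin n) (Fin n) F := Matrix.single 0 0 1 with hEdef
  refine ⟨A, E - (n : F)⁻¹ • 1, ?_, ?_, ?_⟩
  · simp [hA, Matrix.trace, Matrix.diag]
  · have h1 : (Matrix.trace (1 : Matrix (Fin n) (Fin n) F)) = (n : F) := by
      simp [Matrix.trace_one]
    rw [Matrix.trace_sub, Matrix.trace_smul, h1, hEdef, Matrix.trace_single_eq_same]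
    simp [inv_mul_cancel₀ hn0]
  · intro g hgA hgB
    set M : Matrix (Fin n) (Fin n) F := (g : Matrix (Fin n) (Fin n) F) with hM
    have hE : M * E = E * M := by
      have h := hgB
      rw [Matrix.mul_sub, Matrix.sub_mul] at h
      have h1 : M * ((n : F)⁻¹ • 1) = ((n : F)⁻¹ • 1) * M := by
        simp [Matrix.mul_smul, Matrix.smul_mul]
      rw [h1] at h
      exact sub_left_inj.mp h
    -- column/row vanishing from E
    have hcol : ∀ i : Fin n, i ≠ 0 → M i 0 = 0 := by
      intro i hi
      have h := congrFun (congrFun hE i) 0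
      simpa [hEdef, Matrix.mul_apply, Matrix.single, Matrix.of_apply,
        Ne.symm hi] using h
    have hrow : ∀ j : Fin n, j ≠ 0 → M 0 j = 0 := by
      intro j hj
      have h := congrFun (congrFun hE 0) j
      have h2 : (0 : F) = M 0 j := by
        simpa [hEdef, Matrix.mul_apply, Matrix.single, Matrix.of_apply,
          Ne.symm hj] using h
      exact h2.symm
    -- recursion from A
    have hrec : ∀ (a b : ℕ) (ha : a + 1 < n) (hb : b + 1 < n),
        M ⟨a + 1, ha⟩ ⟨b + 1, hb⟩ = M ⟨a, by omega⟩ ⟨b, by omega⟩ := by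
      intro a b ha hb
      have h := congrFun (congrFun hgA (⟨a, by omega⟩ : Fin n)) ⟨b + 1, hb⟩
      have hL : ((M * A) (⟨a, by omega⟩ : Fin n)) ⟨b + 1, hb⟩ = M ⟨a, by omega⟩ ⟨b, by omega⟩ := by
        rw [Matrix.mul_apply]
        rw [Finset.sum_eq_single (⟨b, by omega⟩ : Fin n)]
        · simp [hA]
        · intro k _ hk
          have hkb : ¬ ((b : ℕ) + 1 = (k : ℕ) + 1) :=
            fun h => hk (Fin.ext (Nat.succ_injective h).symm)
          simp [hA, hkb, show ¬ (b = (k : ℕ)) by omega]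
        · simp
      have hR : ((A * M) (⟨a, by omega⟩ : Fin n)) ⟨b + 1, hb⟩ = M ⟨a + 1, ha⟩ ⟨b + 1, hb⟩ := by
        rw [Matrix.mul_apply]
        rw [Finset.sum_eq_single (⟨a + 1, ha⟩ : Fin n)]
        · simp [hA]
        · intro k _ hk
          have hka : ¬ ((k : ℕ) = a + 1) := fun h => hk (Fin.ext h)
          simp [hA, hka]
        · simp
      rw [hL, hR] at h
      exact h.symm
    -- main claim
    have key : ∀ (a b : ℕ) (ha : a < n) (hb : b < n),
        M ⟨a, ha⟩ ⟨b, hb⟩ = if a = b then M 0 0 else 0 := by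
      intro a
      induction a with
      | zero =>
        intro b hb hb'
        have e0 : (⟨0, hb⟩ : Fin n) = 0 := Fin.ext (by simp)
        rcases Nat.eq_zero_or_pos b with h0 | h0
        · subst h0
          rw [e0, if_pos rfl]
        · have hne : (⟨b, hb'⟩ : Fin n) ≠ 0 := by
            intro hh
            have := congrArg Fin.val hh
            simp at this
            omega
          rw [e0, hrow _ hne, if_neg (by omega)]
      | succ a ih =>
        intro b ha hb
        rcases Nat.eq_zero_or_pos b with h0 | h0
        · subst h0
          have e0 : (⟨0, hb⟩ : Fin n) = 0 := Fin.ext (by simp)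
          have hne : (⟨a + 1, ha⟩ : Fin n) ≠ 0 := by
            intro hh
            have := congrArg Fin.val hh
            simp at this
          rw [e0, hcol _ hne, if_neg (by omega)]
        · obtain ⟨b', rfl⟩ : ∃ b', b = b' + 1 := ⟨b - 1, by omega⟩
          rw [hrec a b' ha hb, ih b' (by omega) (by omega)]
          simp
    refine ⟨M 0 0, ?_⟩
    ext i j
    have := key i j i.isLt j.isLt
    simp only [Fin.eta] at this
    rw [this]
    by_cases hij : i = j
    · simp [hij, Matrix.one_apply, Fin.ext_iff]
    · have : (i : ℕ) ≠ (j : ℕ) := fun h => hij (Fin.ext h)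
      simp [Matrix.one_apply, hij, this]
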